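/- arXiv:1605.06918 — 3 statements merged into one kernel-verified Lean document; each statement's English description precedes it below -/
import Mathlib

section
/- For every n ≥ 1, the Roman domination number of the path P_n equals ⌈2n/3⌉. -/
variable {V : Type*}

/-- A Roman dominating function: every vertex with value 0 has a neighbor with value 2. -/
def IsRDF (G : SimpleGraph V) (f : V → Fin 3) : Prop :=
  ∀ v, f v = 0 → ∃ u, G.Adj u v ∧ f u = 2

/-- The weight of a Roman dominating function. -/
def romanWeight [Fintype V] (f : V → Fin 3) : ℕ := ∑ v, (f v : ℕ)

/-- The Roman domination number. -/
noncomputable def gammaR [Fintype V] (G : SimpleGraph V) : ℕ :=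
  sInf {k | ∃ f : V → Fin 3, IsRDF G f ∧ romanWeight f = k}

/-- A dominating set. -/
def IsDomSet (G : SimpleGraph V) (D : Set V) : Prop :=
  ∀ v, v ∈ D ∨ ∃ u ∈ D, G.Adj u v

/-- The domination number. -/
noncomputable def gamma [Fintype V] (G : SimpleGraph V) : ℕ :=
  sInf {k | ∃ D : Set V, IsDomSet G D ∧ D.ncard = k}

/-- The generalized Sierpiński graph `S(G,t)` on words of length `t` over `V`. -/
def sierpinski (G : SimpleGraph V) (t : ℕ) : SimpleGraph (Fin t → V) where
  Adj x y := ∃ i : Fin t, (∀ j, j < i → x j = y j) ∧ G.Adj (x i) (y i) ∧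
    (∀ j, i < j → x j = y i ∧ y j = x i)
  symm := by
    constructor
    rintro x y ⟨i, h1, h2, h3⟩
    exact ⟨i, fun j hj => (h1 j hj).symm, h2.symm, fun j hj => ⟨(h3 j hj).2, (h3 j hj).1⟩⟩
  loopless := by
    constructor
    rintro x ⟨i, -, h2, -⟩
    exact G.irrefl h2

lemma base_sum (n : ℕ) :
    ∑ i ∈ Finset.range n, (if i % 3 = 1 then 2 else 0) = 2 * ((n + 1) / 3) := by
  induction n with
  | zero => simp
  | succ n ih =>
    rw [Finset.sum_range_succ, ih]
    split_ifs with h <;> omega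

/-- the witness RDF -/
def f0 (n : ℕ) : Fin n → Fin 3 := fun i =>
  if i.val % 3 = 1 then 2 else if i.val % 3 = 0 ∧ i.val + 1 = n then 1 else 0

lemma f0_rdf (n : ℕ) : IsRDF (SimpleGraph.pathGraph n) (f0 n) := by
  intro v hv
  unfold f0 at hv
  split_ifs at hv with h1 h2
  · exact absurd hv (by decide)
  · exact absurd hv (by decide)
  · -- v % 3 ≠ 1, ¬(v % 3 = 0 ∧ v+1 = n)
    have hvn : v.val < n := v.isLt
    have hcases : v.val % 3 = 0 ∨ v.val % 3 = 2 := by omega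
    rcases hcases with h | h
    · -- neighbor v+1
      have hlt : v.val + 1 < n := by
        rcases Nat.lt_or_ge (v.val + 1) n with h' | h'
        · exact h'
        · exact absurd ⟨h, by omega⟩ h2
      refine ⟨⟨v.val + 1, hlt⟩, ?_, ?_⟩
      · rw [SimpleGraph.pathGraph_adj]; right; simp
      · unfold f0; simp only []
        rw [if_pos]; omega
    · -- neighbor v-1
      refine ⟨⟨v.val - 1, by omega⟩, ?_, ?_⟩
      · rw [SimpleGraph.pathGraph_adj]; left; simp; omega
      · unfold f0; simp only []
        rw [if_pos]; omega

lemma f0_weight (n : ℕ) (hn : 1 ≤ n) : romanWeight (f0 n) = (2 * n + 2) / 3 := by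
  unfold romanWeight
  have hcast : ∀ i : Fin n, ((f0 n i : ℕ)) =
      (if i.val % 3 = 1 then 2 else if i.val % 3 = 0 ∧ i.val + 1 = n then 1 else 0) := by
    intro i; unfold f0; split_ifs <;> rfl
  rw [Finset.sum_congr rfl (fun i _ => hcast i)]
  rw [Fin.sum_univ_eq_sum_range (fun i => if i % 3 = 1 then 2 else if i % 3 = 0 ∧ i + 1 = n then 1 else 0)]
  obtain ⟨m, rfl⟩ : ∃ m, n = m + 1 := ⟨n - 1, by omega⟩
  rw [Finset.sum_range_succ]
  have : ∑ i ∈ Finset.range m, (if i % 3 = 1 then 2 else if i % 3 = 0 ∧ i + 1 = m + 1 then 1 else 0)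
      = ∑ i ∈ Finset.range m, (if i % 3 = 1 then 2 else 0) := by
    apply Finset.sum_congr rfl
    intro i hi
    simp only [Finset.mem_range] at hi
    split_ifs with h1 h2 <;> omega
  rw [this, base_sum]
  split_ifs with h1 h2 <;> omega

lemma rdf_lower (n : ℕ) (f : Fin n → Fin 3) (hf : IsRDF (SimpleGraph.pathGraph n) f) :
    2 * n ≤ 3 * romanWeight f := by
  classical
  set B0 := Finset.univ.filter (fun v : Fin n => f v = 0) with hB0
  set B1 := Finset.univ.filter (fun v : Fin n => f v = 1) with hB1
  set B2 := Finset.univ.filter (fun v : Fin n => f v = 2) with hB2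
  -- injection from zeros into twos × Bool
  have h' : ∀ v : Fin n, ∃ u, f v = 0 → (SimpleGraph.pathGraph n).Adj u v ∧ f u = 2 := by
    intro v
    by_cases h : f v = 0
    · exact (hf v h).imp fun u hu => fun _ => hu
    · exact ⟨v, fun h' => absurd h' h⟩
  choose g hg using h'
  have hcard : B0.card ≤ 2 * B2.card := by
    have := Finset.card_le_card_of_injOn
      (fun v => ((g v, decide ((g v).val < v.val)) : Fin n × Bool))
      (s := B0) (t := B2 ×ˢ Finset.univ) ?_ ?_
    · simpa [Finset.card_product, mul_comm] using this
    · intro v hv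
      simp only [hB0, Finset.mem_coe, Finset.mem_filter] at hv
      obtain ⟨-, hv0⟩ := hv
      obtain ⟨hadj, hval⟩ := hg v hv0
      refine Finset.mem_product.mpr ⟨?_, Finset.mem_univ _⟩
      simp [hB2, hval]
    · intro v hv w hw hvw
      simp only [Finset.coe_filter, Set.mem_setOf_eq, hB0, Finset.mem_filter] at hv hw
      obtain ⟨hadjv, -⟩ := hg v hv.2
      obtain ⟨hadjw, -⟩ := hg w hw.2
      simp only [Prod.mk.injEq, decide_eq_decide] at hvw
      obtain ⟨h1, h2⟩ := hvw
      rw [SimpleGraph.pathGraph_adj] at hadjv hadjw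
      rw [h1] at hadjv
      apply Fin.ext
      omega
  -- count
  have hsum : ∀ (k : Fin 3), (Finset.univ.filter (fun v : Fin n => f v = k)).card
      = ∑ v : Fin n, (if f v = k then 1 else 0) := by
    intro k; rw [Finset.card_filter]
  have key : ∀ x : Fin 3, (x : ℕ) = (if x = 1 then 1 else 0) + (if x = 2 then 2 else 0) := by decide
  have key2 : ∀ x : Fin 3, 1 = (if x = 0 then 1 else 0) + (if x = 1 then 1 else 0) + (if x = 2 then 1 else 0) := by decide
  have hW : romanWeight f = B1.card + 2 * B2.card := by
    unfold romanWeight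
    rw [hB1, hB2, hsum, hsum, Finset.mul_sum, ← Finset.sum_add_distrib]
    apply Finset.sum_congr rfl
    intro v _
    rw [key (f v)]
    split_ifs <;> ring
  have hn' : n = B0.card + B1.card + B2.card := by
    rw [hB0, hB1, hB2, hsum, hsum, hsum, ← Finset.sum_add_distrib, ← Finset.sum_add_distrib]
    have : ∀ v : Fin n, (1 : ℕ) = (if f v = 0 then 1 else 0) + (if f v = 1 then 1 else 0) + (if f v = 2 then 1 else 0) :=
      fun v => key2 (f v)
    calc n = ∑ _v : Fin n, 1 := by simp
    _ = _ := Finset.sum_congr rfl (fun v _ => this v)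
  omega

theorem stmt3 (n : ℕ) (hn : 1 ≤ n) :
    (gammaR (SimpleGraph.pathGraph n) : ℤ) = ⌈(2 * n : ℚ) / 3⌉ := by
  have hmem : (2 * n + 2) / 3 ∈ {k | ∃ f : Fin n → Fin 3, IsRDF (SimpleGraph.pathGraph n) f ∧ romanWeight f = k} :=
    ⟨f0 n, f0_rdf n, f0_weight n hn⟩
  have hval : gammaR (SimpleGraph.pathGraph n) = (2 * n + 2) / 3 := by
    unfold gammaR
    apply le_antisymm (Nat.sInf_le hmem)
    apply le_csInf ⟨_, hmem⟩
    rintro k ⟨f, hf, rfl⟩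
    have := rdf_lower n f hf
    omega
  rw [hval, eq_comm, Int.ceil_eq_iff]
  have h1 : 3 * ((2 * n + 2) / 3) ≤ 2 * n + 2 ∧ 2 * n ≤ 3 * ((2 * n + 2) / 3) := by omega
  have q1 : (3 : ℚ) * (((2 * n + 2) / 3 : ℕ) : ℚ) ≤ 2 * n + 2 := by exact_mod_cast h1.1
  have q2 : (2 : ℚ) * n ≤ 3 * (((2 * n + 2) / 3 : ℕ) : ℚ) := by exact_mod_cast h1.2
  constructor
  · rw [Int.cast_natCast]
    linarith
  · rw [Int.cast_natCast]
    linarith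
end

section
/- For every n ≥ 3, the Roman domination number of the cycle C_n equals ⌈2n/3⌉. -/
variable {V : Type*}

/-! ### Auxiliary lemmas -/

private lemma fin3_trichotomy (x : Fin 3) : x = 0 ∨ x = 1 ∨ x = 2 := by
  fin_cases x <;> simp

private lemma fin_sub_one_val {m : ℕ} (v : Fin (m+3)) (h : 1 ≤ v.val) :
    (v - 1).val = v.val - 1 := by
  rw [Fin.sub_def]
  have hv := v.isLt
  simp only [Fin.val_one']
  have h2 : m + 3 - 1 % (m+3) + v.val = (v.val - 1) + (m + 3) := by
    rw [Nat.mod_eq_of_lt (by omega)]; omega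
  show (m + 3 - 1 % (m+3) + v.val) % (m+3) = v.val - 1
  rw [h2, Nat.add_mod_right, Nat.mod_eq_of_lt (by omega)]

private lemma fin_add_one_val {m : ℕ} (v : Fin (m+3)) (h : v.val < m + 2) :
    (v + 1).val = v.val + 1 := by
  rw [Fin.add_def]
  simp only [Fin.val_one']
  rw [Nat.mod_eq_of_lt (a := 1) (by omega)]
  exact Nat.mod_eq_of_lt (by omega)

private lemma fin_one_val {m : ℕ} : ((1 : Fin (m+3)) : ℕ) = 1 := by
  rw [Fin.val_one']; exact Nat.mod_eq_of_lt (by omega)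

/-- The explicit Roman dominating function on the cycle. -/
private def rdfFun (n : ℕ) : Fin n → Fin 3 := fun v =>
  if v.val % 3 = 1 then 2 else if v.val = n - 1 ∧ n % 3 = 1 then 1 else 0

private lemma rdfFun_isRDF (m : ℕ) :
    IsRDF (SimpleGraph.cycleGraph (m+3)) (rdfFun (m+3)) := by
  intro v hv
  unfold rdfFun at hv
  split_ifs at hv with h1 h2
  · exact absurd hv (by decide)
  · exact absurd hv (by decide)
  have hvlt := v.isLt
  rcases (by omega : v.val % 3 = 0 ∨ v.val % 3 = 1 ∨ v.val % 3 = 2) with h0 | h0 | h0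
  · -- v.val % 3 = 0 : use v + 1
    have hne : v.val < m + 2 := by
      by_contra hc
      have : v.val = m + 2 := by omega
      exact h2 ⟨by omega, by omega⟩
    refine ⟨v + 1, ?_, ?_⟩
    · rw [SimpleGraph.cycleGraph_adj']
      left
      rw [add_sub_cancel_left, fin_one_val]
    · unfold rdfFun
      rw [fin_add_one_val v hne, if_pos (by omega)]
  · exact absurd h0 h1
  · -- v.val % 3 = 2 : use v - 1
    refine ⟨v - 1, ?_, ?_⟩
    · rw [SimpleGraph.cycleGraph_adj']
      right
      rw [sub_sub_cancel, fin_one_val]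
    · unfold rdfFun
      rw [fin_sub_one_val v (by omega), if_pos (by omega)]

private lemma count_mod3 (n : ℕ) :
    ((Finset.range n).filter (fun v => v % 3 = 1)).card = (n+1)/3 := by
  induction n with
  | zero => simp
  | succ n ih =>
    rw [Finset.range_add_one, Finset.filter_insert]
    by_cases h : n % 3 = 1
    · rw [if_pos h, Finset.card_insert_of_notMem (by simp), ih]
      omega
    · rw [if_neg h, ih]
      omega

private lemma rdfFun_weight (m : ℕ) :
    romanWeight (rdfFun (m+3)) = (2*(m+3)+2)/3 := by
  set n := m + 3 with hn
  have h1 : romanWeight (rdfFun n) =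
      ∑ v : Fin n, ((if v.val % 3 = 1 then 2 else 0) +
        (if v.val = n - 1 ∧ n % 3 = 1 then 1 else 0)) := by
    unfold romanWeight rdfFun
    refine Finset.sum_congr rfl fun v _ => ?_
    split_ifs with hA hB
    · omega
    · rfl
    · rfl
    · rfl
  rw [h1, Finset.sum_add_distrib]
  have h2 : ∑ v : Fin n, (if v.val % 3 = 1 then 2 else 0) = 2 * ((n+1)/3) := by
    rw [Fin.sum_univ_eq_sum_range (fun i => if i % 3 = 1 then 2 else 0) n]
    rw [← count_mod3 n, Finset.card_filter, Finset.mul_sum]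
    refine Finset.sum_congr rfl fun i _ => ?_
    split_ifs <;> simp
  have h3 : ∑ v : Fin n, (if v.val = n - 1 ∧ n % 3 = 1 then 1 else 0)
      = if n % 3 = 1 then 1 else 0 := by
    rw [Fin.sum_univ_eq_sum_range (fun i => if i = n - 1 ∧ n % 3 = 1 then 1 else 0) n]
    by_cases h : n % 3 = 1
    · simp only [h, and_true]
      rw [Finset.sum_ite_eq' (Finset.range n) (n-1) (fun _ => 1),
        if_pos (Finset.mem_range.mpr (by omega))]
      simp [h]
    · simp [h]
  rw [h2, h3]
  split_ifs with h <;> omega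

private lemma weight_lower {m : ℕ} (f : Fin (m+3) → Fin 3)
    (hf : IsRDF (SimpleGraph.cycleGraph (m+3)) f) :
    2 * (m+3) ≤ 3 * romanWeight f := by
  classical
  set V0 := Finset.univ.filter (fun v : Fin (m+3) => f v = 0) with hV0
  set V1 := Finset.univ.filter (fun v : Fin (m+3) => f v = 1) with hV1
  set V2 := Finset.univ.filter (fun v : Fin (m+3) => f v = 2) with hV2
  have hpart : V0.card + V1.card + V2.card = m + 3 := by
    rw [hV0, hV1, hV2, Finset.card_filter, Finset.card_filter, Finset.card_filter,
      ← Finset.sum_add_distrib, ← Finset.sum_add_distrib]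
    have : ∀ v : Fin (m+3), ((if f v = 0 then 1 else 0) + (if f v = 1 then 1 else 0))
        + (if f v = 2 then 1 else 0) = 1 := by
      intro v
      rcases fin3_trichotomy (f v) with h | h | h <;> simp [h]
    rw [Finset.sum_congr rfl fun v _ => this v, Finset.sum_const, smul_eq_mul, mul_one,
      Finset.card_univ, Fintype.card_fin]
  have hw : romanWeight f = V1.card + 2 * V2.card := by
    unfold romanWeight
    rw [hV1, hV2, Finset.card_filter, Finset.card_filter, Finset.mul_sum,
      ← Finset.sum_add_distrib]
    refine Finset.sum_congr rfl fun v _ => ?_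
    rcases fin3_trichotomy (f v) with h | h | h <;> simp [h]
  have hsub : V0 ⊆ V2.biUnion (fun u => (SimpleGraph.cycleGraph (m+3)).neighborFinset u) := by
    intro v hv
    rw [hV0, Finset.mem_filter] at hv
    obtain ⟨u, hadj, hu2⟩ := hf v hv.2
    rw [Finset.mem_biUnion]
    exact ⟨u, by rw [hV2]; simp [hu2], (SimpleGraph.mem_neighborFinset _ _ _).mpr hadj⟩
  have hcard : V0.card ≤ 2 * V2.card := by
    calc V0.card ≤ (V2.biUnion (fun u => (SimpleGraph.cycleGraph (m+3)).neighborFinset u)).card :=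
          Finset.card_le_card hsub
      _ ≤ ∑ u ∈ V2, ((SimpleGraph.cycleGraph (m+3)).neighborFinset u).card :=
          Finset.card_biUnion_le
      _ = ∑ u ∈ V2, 2 := by
          refine Finset.sum_congr rfl fun u _ => ?_
          exact SimpleGraph.cycleGraph_degree_three_le
      _ = 2 * V2.card := by rw [Finset.sum_const, smul_eq_mul, mul_comm]
  omega

theorem stmt4 (n : ℕ) (hn : 3 ≤ n) :
    (gammaR (SimpleGraph.cycleGraph n) : ℤ) = ⌈(2 * n : ℚ) / 3⌉ := by
  obtain ⟨m, rfl⟩ : ∃ m, n = m + 3 := ⟨n - 3, by omega⟩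
  have hmem : romanWeight (rdfFun (m+3)) ∈
      {k | ∃ f : Fin (m+3) → Fin 3, IsRDF (SimpleGraph.cycleGraph (m+3)) f ∧ romanWeight f = k} :=
    ⟨rdfFun (m+3), rdfFun_isRDF m, rfl⟩
  have hgr : gammaR (SimpleGraph.cycleGraph (m+3)) = (2*(m+3)+2)/3 := by
    apply le_antisymm
    · have := Nat.sInf_le hmem
      rwa [rdfFun_weight m] at this
    · apply le_csInf ⟨_, hmem⟩
      rintro k ⟨f, hf, rfl⟩
      have := weight_lower f hf
      omega
  rw [hgr]
  set q := (2*(m+3)+2)/3 with hq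
  have hq1 : 3 * q ≤ 2*m+8 := by omega
  have hq2 : 2*m+6 ≤ 3 * q := by omega
  have hq1' : (3 * q : ℚ) ≤ 2*(m:ℚ)+8 := by exact_mod_cast hq1
  have hq2' : (2*(m:ℚ)+6) ≤ 3 * q := by exact_mod_cast hq2
  symm
  rw [Int.ceil_eq_iff]
  constructor
  · rw [lt_div_iff₀ (by norm_num : (0:ℚ) < 3)]
    push_cast
    linarith
  · rw [div_le_iff₀ (by norm_num : (0:ℚ) < 3)]
    push_cast
    linarith
end

section
/- For any graph G of order n ≥ 2 and integer t ≥ 1, the map g assigning to a word wx ∈ V^t (with w ∈ V^{t-1}, x ∈ V) the value f(x), where f is a Roman dominating function on G, is a Roman dominating function on S(G,t); consequently γ_R(S(G,t)) ≤ n^{t-1} γ_R(G). -/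
variable {V : Type*}

lemma sum_eval_coord [Fintype V] (t : ℕ) (i : Fin t) (h : V → ℕ) :
    ∑ x : Fin t → V, h (x i) = Fintype.card V ^ (t - 1) * ∑ v, h v := by
  have e := Fintype.sum_equiv (Equiv.funSplitAt i V) (fun x => h (x i)) (fun p => h p.1)
    (fun x => rfl)
  rw [e, Fintype.sum_prod_type]
  simp [Finset.sum_const, mul_comm, Finset.sum_mul]

lemma rdf_lift (G : SimpleGraph V) (t : ℕ) (i : Fin t) (hi : i.1 = t - 1)
    (f : V → Fin 3) (hf : IsRDF G f) :
    IsRDF (sierpinski G t) (fun x => f (x i)) := by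
  intro x hx
  obtain ⟨u, hu, hu2⟩ := hf _ hx
  refine ⟨Function.update x i u, ⟨i, ?_, ?_, ?_⟩, ?_⟩
  · intro j hj
    rw [Function.update_of_ne (Fin.ne_of_lt hj)]
  · simpa using hu
  · intro j hj
    exfalso
    have h1 := j.isLt
    have h2 : i.1 < j.1 := hj
    clear hx hu hu2 hf hj
    omega
  · show f (Function.update x i u i) = 2
    rw [Function.update_self]
    exact hu2

theorem stmt7 [Fintype V] (G : SimpleGraph V) (n t : ℕ) (hn : Fintype.card V = n)
    (hn2 : 2 ≤ n) (ht : 1 ≤ t) (f : V → Fin 3) (hf : IsRDF G f) :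
    IsRDF (sierpinski G t) (fun x => f (x ⟨t - 1, by omega⟩)) ∧
      gammaR (sierpinski G t) ≤ n ^ (t - 1) * gammaR G := by
  have key : ∀ g : V → Fin 3, IsRDF G g →
      gammaR (sierpinski G t) ≤ n ^ (t - 1) * romanWeight g := by
    intro g hg
    have hrdf := rdf_lift G t ⟨t - 1, by omega⟩ rfl g hg
    apply Nat.sInf_le
    refine ⟨_, hrdf, ?_⟩
    show ∑ x : Fin t → V, ((g (x ⟨t - 1, by omega⟩) : ℕ)) = _
    rw [sum_eval_coord t ⟨t - 1, by omega⟩ (fun v => (g v : ℕ)), hn]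
    rfl
  refine ⟨rdf_lift G t ⟨t - 1, by omega⟩ rfl f hf, ?_⟩
  have hne : {k | ∃ f : V → Fin 3, IsRDF G f ∧ romanWeight f = k}.Nonempty :=
    ⟨romanWeight f, f, hf, rfl⟩
  obtain ⟨f', hf', hw⟩ := Nat.sInf_mem hne
  rw [show gammaR G = romanWeight f' from hw.symm]
  exact key f' hf'
end
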